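/- For every t ≥ 0, the set A := {γ ∈ [0,1] : √n·C(γ) ≤ t} is a convex subset of [0,1] that contains 1; consequently A is an interval of the form [inf A, 1]. -/

import Mathlib

open Filter Topology

/-- A cumulative distribution function: non-decreasing, right-continuous,
tending to 0 at -∞ and to 1 at +∞. -/
def IsCDF (G : ℝ → ℝ) : Prop :=
  Monotone G ∧ (∀ x : ℝ, ContinuousWithinAt G (Set.Ici x) x) ∧
    Tendsto G atBot (𝓝 0) ∧ Tendsto G atTop (𝓝 1)

/-- The identifiable mixing proportion α₀. -/
noncomputable def alpha0 (F Fb : ℝ → ℝ) : ℝ :=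
  sInf {γ : ℝ | γ ∈ Set.Ioc (0 : ℝ) 1 ∧
    IsCDF (fun x => (F x - (1 - γ) * Fb x) / γ)}


lemma sqrt_sum_sq_add_le (n : ℕ) (u v : Fin n → ℝ) :
    Real.sqrt (∑ i, (u i + v i)^2) ≤ Real.sqrt (∑ i, (u i)^2) + Real.sqrt (∑ i, (v i)^2) := by
  let U : EuclideanSpace ℝ (Fin n) := WithLp.toLp 2 u
  let V : EuclideanSpace ℝ (Fin n) := WithLp.toLp 2 v
  have h := norm_add_le U V
  simpa [U, V, EuclideanSpace.norm_eq, Real.norm_eq_abs, sq_abs] using h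

lemma wsqrt_add (n : ℕ) (c : ℝ) (hc : 0 ≤ c) (u v : Fin n → ℝ) :
    Real.sqrt (c * ∑ i, (u i + v i)^2) ≤
      Real.sqrt (c * ∑ i, (u i)^2) + Real.sqrt (c * ∑ i, (v i)^2) := by
  rw [Real.sqrt_mul hc, Real.sqrt_mul hc, Real.sqrt_mul hc, ← mul_add]
  exact mul_le_mul_of_nonneg_left (sqrt_sum_sq_add_le n u v) (Real.sqrt_nonneg _)

lemma wsqrt_smul (n : ℕ) (c : ℝ) (a : ℝ) (ha : 0 ≤ a) (u : Fin n → ℝ) :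
    Real.sqrt (c * ∑ i, (a * u i)^2) = a * Real.sqrt (c * ∑ i, (u i)^2) := by
  have : (c * ∑ i, (a * u i)^2) = a^2 * (c * ∑ i, (u i)^2) := by
    rw [Finset.mul_sum, Finset.mul_sum, Finset.mul_sum]
    exact Finset.sum_congr rfl fun i _ => by ring
  rw [this, Real.sqrt_mul (sq_nonneg a), Real.sqrt_sq ha]

lemma wsqrt_bound (n : ℕ) (d : ℝ) (hd : 0 ≤ d) (u : Fin n → ℝ)
    (hu : ∀ i, |u i| ≤ d) :
    Real.sqrt ((n : ℝ)⁻¹ * ∑ i, (u i)^2) ≤ d := by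
  rcases Nat.eq_zero_or_pos n with h | h
  · subst h; simpa using hd
  have h1 : (∑ i, (u i)^2) ≤ (n : ℝ) * d^2 := by
    calc (∑ i, (u i)^2) ≤ ∑ _i : Fin n, d^2 := by
          refine Finset.sum_le_sum fun i _ => ?_
          have := hu i
          calc (u i)^2 = |u i|^2 := (sq_abs _).symm
            _ ≤ d^2 := by nlinarith [abs_nonneg (u i)]
      _ = (n : ℝ) * d^2 := by simp [Finset.sum_const, mul_comm]
  have hn : (0:ℝ) < n := by exact_mod_cast h
  have : (n : ℝ)⁻¹ * ∑ i, (u i)^2 ≤ d^2 := by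
    rw [inv_mul_le_iff₀ hn]; nlinarith
  calc Real.sqrt ((n : ℝ)⁻¹ * ∑ i, (u i)^2) ≤ Real.sqrt (d^2) := Real.sqrt_le_sqrt this
    _ = d := Real.sqrt_sq hd

lemma IsCDF.nonneg {G : ℝ → ℝ} (h : IsCDF G) (x : ℝ) : 0 ≤ G x :=
  le_of_tendsto h.2.2.1 ((eventually_le_atBot x).mono fun y hy => h.1 hy)

lemma IsCDF.le_one {G : ℝ → ℝ} (h : IsCDF G) (x : ℝ) : G x ≤ 1 :=
  ge_of_tendsto h.2.2.2 ((eventually_ge_atTop x).mono fun y hy => h.1 hy)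

lemma isCDF_comb {a b : ℝ} (ha : 0 ≤ a) (hb : 0 ≤ b) (hab : a + b = 1)
    {W₁ W₂ : ℝ → ℝ} (h₁ : IsCDF W₁) (h₂ : IsCDF W₂) :
    IsCDF (fun x => a * W₁ x + b * W₂ x) := by
  refine ⟨fun s u hsu => add_le_add (mul_le_mul_of_nonneg_left (h₁.1 hsu) ha)
      (mul_le_mul_of_nonneg_left (h₂.1 hsu) hb), fun x => ?_, ?_, ?_⟩
  · exact ((continuousWithinAt_const.mul (h₁.2.1 x)).add
      (continuousWithinAt_const.mul (h₂.2.1 x)))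
  · have := (h₁.2.2.1.const_mul a).add (h₂.2.2.1.const_mul b)
    simpa using this
  · have := (h₁.2.2.2.const_mul a).add (h₂.2.2.2.const_mul b)
    simpa [hab, mul_one] using this

lemma empirical_isCDF (n : ℕ) (hn : 0 < n) (x : Fin n → ℝ) :
    IsCDF (fun s => (n : ℝ)⁻¹ * ∑ i, if x i ≤ s then (1 : ℝ) else 0) := by
  classical
  have hne : Nonempty (Fin n) := ⟨⟨0, hn⟩⟩
  have hnR : (0:ℝ) < n := by exact_mod_cast hn
  refine ⟨?_, ?_, ?_, ?_⟩
  · intro s u hsu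
    refine mul_le_mul_of_nonneg_left (Finset.sum_le_sum fun i _ => ?_) (by positivity)
    by_cases h : x i ≤ s
    · simp [h, le_trans h hsu]
    · split_ifs <;> norm_num
  · intro s
    obtain ⟨u, hu, hsep⟩ : ∃ u, s < u ∧ ∀ i, x i ≤ s ∨ u ≤ x i := by
      by_cases hS : (Finset.univ.filter (fun i => s < x i)).Nonempty
      · refine ⟨(Finset.univ.filter (fun i => s < x i)).inf' hS x, ?_, ?_⟩
        · exact (Finset.lt_inf'_iff hS).mpr fun i hi => (Finset.mem_filter.mp hi).2
        · intro i
          by_cases hi : s < x i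
          · exact Or.inr (Finset.inf'_le (f := x) (Finset.mem_filter.mpr ⟨Finset.mem_univ i, hi⟩))
          · exact Or.inl (le_of_not_gt hi)
      · refine ⟨s + 1, by linarith, fun i => Or.inl ?_⟩
        by_contra hi
        exact hS ⟨i, Finset.mem_filter.mpr ⟨Finset.mem_univ _, lt_of_not_ge hi⟩⟩
    have heq : ∀ y ∈ Set.Ico s u,
        (n : ℝ)⁻¹ * ∑ i, (if x i ≤ y then (1:ℝ) else 0)
          = (n : ℝ)⁻¹ * ∑ i, (if x i ≤ s then (1:ℝ) else 0) := by
      intro y hy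
      congr 1
      refine Finset.sum_congr rfl fun i _ => ?_
      rcases hsep i with h | h
      · simp [h, le_trans h hy.1]
      · have h1 : ¬ x i ≤ y := not_le.mpr (lt_of_lt_of_le hy.2 h)
        have h2 : ¬ x i ≤ s := not_le.mpr (lt_of_lt_of_le hu h)
        simp [h1, h2]
    have hmem : Set.Ico s u ∈ 𝓝[Set.Ici s] s :=
      Ico_mem_nhdsGE hu
    refine ContinuousWithinAt.congr_of_eventuallyEq
      (continuousWithinAt_const (b := (n : ℝ)⁻¹ * ∑ i, if x i ≤ s then (1:ℝ) else 0)) ?_ ?_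
    · exact Filter.eventuallyEq_of_mem hmem fun y hy => heq y hy
    · rfl
  · have hm : ∀ᶠ y in atBot, (n : ℝ)⁻¹ * ∑ i, (if x i ≤ y then (1:ℝ) else 0) = 0 := by
      filter_upwards [eventually_lt_atBot (Finset.univ.inf' Finset.univ_nonempty x)] with y hy
      have : ∀ i : Fin n, ¬ x i ≤ y := fun i =>
        not_le.mpr (lt_of_lt_of_le hy (Finset.inf'_le _ (Finset.mem_univ i)))
      simp [this]
    exact Tendsto.congr' (hm.mono fun y hy => hy.symm) tendsto_const_nhds
  · have hm : ∀ᶠ y in atTop, (n : ℝ)⁻¹ * ∑ i, (if x i ≤ y then (1:ℝ) else 0) = 1 := by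
      filter_upwards [eventually_ge_atTop (Finset.univ.sup' Finset.univ_nonempty x)] with y hy
      have : ∀ i : Fin n, x i ≤ y := fun i =>
        le_trans (Finset.le_sup' _ (Finset.mem_univ i)) hy
      simp [this, Finset.sum_const]
      field_simp
    exact Tendsto.congr' (hm.mono fun y hy => hy.symm) tendsto_const_nhds

/-- Lemma 7: the set Aₙ = {γ ∈ [0,1] : √n γ dₙ(F̂ₛₙᵞ, F̌ₛₙᵞ) ≤ t} is a convex
subset of [0,1] containing 1, hence an interval of the form [inf Aₙ, 1]. -/
theorem level_set_is_interval
    (Fb : ℝ → ℝ) (hFb : IsCDF Fb)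
    (n : ℕ) (hn : 0 < n) (x : Fin n → ℝ)
    (Fn : ℝ → ℝ) (hFn : Fn = fun t => (n : ℝ)⁻¹ * ∑ i, if x i ≤ t then (1 : ℝ) else 0)
    (C : ℝ → ℝ)
    (hC0 : C 0 = Real.sqrt ((n : ℝ)⁻¹ * ∑ i, (Fn (x i) - Fb (x i)) ^ 2))
    (hC : ∀ γ ∈ Set.Ioc (0 : ℝ) 1, C γ = sInf {v : ℝ | ∃ W : ℝ → ℝ, IsCDF W ∧
      v = Real.sqrt ((n : ℝ)⁻¹ *
        ∑ i, (Fn (x i) - γ * W (x i) - (1 - γ) * Fb (x i)) ^ 2)})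
    (t : ℝ) (ht : 0 ≤ t)
    (A : Set ℝ) (hA : A = {γ : ℝ | γ ∈ Set.Icc (0 : ℝ) 1 ∧ Real.sqrt n * C γ ≤ t}) :
    Convex ℝ A ∧ A ⊆ Set.Icc (0 : ℝ) 1 ∧ (1 : ℝ) ∈ A ∧ A = Set.Icc (sInf A) 1 := by
  classical
  have hnR : (0:ℝ) < n := by exact_mod_cast hn
  have hsn : (0:ℝ) < Real.sqrt n := Real.sqrt_pos.mpr hnR
  set f : ℝ → (ℝ → ℝ) → ℝ := fun γ W =>
    Real.sqrt ((n:ℝ)⁻¹ * ∑ i, (Fn (x i) - γ * W (x i) - (1-γ) * Fb (x i))^2) with hf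
  set S : ℝ → Set ℝ := fun γ => {v | ∃ W, IsCDF W ∧ v = f γ W} with hS
  have hSne : ∀ γ, (S γ).Nonempty := fun γ => ⟨f γ Fb, Fb, hFb, rfl⟩
  have hSnn : ∀ γ, ∀ v ∈ S γ, (0:ℝ) ≤ v := by
    rintro γ v ⟨W, -, rfl⟩; exact Real.sqrt_nonneg _
  have hSbdd : ∀ γ, BddBelow (S γ) := fun γ => ⟨0, fun v hv => hSnn γ v hv⟩
  have hf0 : ∀ W : ℝ → ℝ, f 0 W = C 0 := by
    intro W
    rw [hC0]
    simp only [hf]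
    congr 2
    exact Finset.sum_congr rfl fun i _ => by ring
  have hCS : ∀ γ ∈ Set.Icc (0:ℝ) 1, C γ = sInf (S γ) := by
    intro γ hγ
    rcases eq_or_lt_of_le hγ.1 with h0 | h0
    · rw [← h0]
      refine le_antisymm (le_csInf (hSne 0) ?_)
        (csInf_le (hSbdd 0) ⟨Fb, hFb, (hf0 Fb).symm⟩)
      rintro v ⟨W, -, rfl⟩
      rw [hf0 W]
    · exact hC γ ⟨h0, hγ.2⟩
  have hLip : ∀ γ₁ γ₂ : ℝ, ∀ W : ℝ → ℝ, IsCDF W → f γ₂ W ≤ f γ₁ W + |γ₁ - γ₂| := by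
    intro γ₁ γ₂ W hW
    have h1 : f γ₂ W = Real.sqrt ((n:ℝ)⁻¹ * ∑ i,
        ((Fn (x i) - γ₁ * W (x i) - (1-γ₁) * Fb (x i))
          + (γ₁-γ₂) * (W (x i) - Fb (x i)))^2) := by
      simp only [hf]
      congr 2
      exact Finset.sum_congr rfl fun i _ => by ring
    rw [h1]
    refine le_trans (wsqrt_add n _ (by positivity) _ _) ?_
    have h2 : Real.sqrt ((n:ℝ)⁻¹ * ∑ i, ((γ₁-γ₂) * (W (x i) - Fb (x i)))^2)
        ≤ |γ₁ - γ₂| := by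
      refine wsqrt_bound n _ (abs_nonneg _) _ fun i => ?_
      rw [abs_mul]
      have hb1 : |W (x i) - Fb (x i)| ≤ 1 := by
        rw [abs_le]
        constructor
        · have := hW.nonneg (x i); have := hFb.le_one (x i); linarith
        · have := hW.le_one (x i); have := hFb.nonneg (x i); linarith
      calc |γ₁-γ₂| * |W (x i) - Fb (x i)| ≤ |γ₁-γ₂| * 1 :=
            mul_le_mul_of_nonneg_left hb1 (abs_nonneg _)
        _ = |γ₁-γ₂| := mul_one _
    exact add_le_add_right h2 _
  have hCLip : ∀ γ₁ ∈ Set.Icc (0:ℝ) 1, ∀ γ₂ ∈ Set.Icc (0:ℝ) 1,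
      C γ₂ ≤ C γ₁ + |γ₁ - γ₂| := by
    intro γ₁ h₁ γ₂ h₂
    rw [hCS γ₁ h₁, hCS γ₂ h₂]
    have hlb : ∀ v ∈ S γ₁, sInf (S γ₂) - |γ₁ - γ₂| ≤ v := by
      rintro v ⟨W, hW, rfl⟩
      have hm : f γ₂ W ∈ S γ₂ := ⟨W, hW, rfl⟩
      have h3 := csInf_le (hSbdd γ₂) hm
      have h4 := hLip γ₁ γ₂ W hW
      linarith
    have := le_csInf (hSne γ₁) hlb
    linarith
  have hComb : ∀ γ₁ γ₂ a b : ℝ, 0 ≤ γ₁ → 0 ≤ γ₂ → 0 ≤ a → 0 ≤ b → a + b = 1 →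
      0 < a*γ₁ + b*γ₂ →
      sInf (S (a*γ₁ + b*γ₂)) ≤ a * sInf (S γ₁) + b * sInf (S γ₂) := by
    intro γ₁ γ₂ a b hγ₁ hγ₂ ha hb hab hpos
    refine le_of_forall_pos_le_add ?_
    intro ε hε
    obtain ⟨v₁, hv₁mem, hv₁⟩ := exists_lt_of_csInf_lt (hSne γ₁)
      (lt_add_of_pos_right (sInf (S γ₁)) hε)
    obtain ⟨W₁, hW₁, rfl⟩ := hv₁mem
    obtain ⟨v₂, hv₂mem, hv₂⟩ := exists_lt_of_csInf_lt (hSne γ₂)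
      (lt_add_of_pos_right (sInf (S γ₂)) hε)
    obtain ⟨W₂, hW₂, rfl⟩ := hv₂mem
    set γ : ℝ := a*γ₁ + b*γ₂ with hγdef
    have hγne : γ ≠ 0 := ne_of_gt hpos
    set c₁ : ℝ := a*γ₁/γ with hc₁def
    set c₂ : ℝ := b*γ₂/γ with hc₂def
    have hc₁ : 0 ≤ c₁ := by positivity
    have hc₂ : 0 ≤ c₂ := by positivity
    have hcs : c₁ + c₂ = 1 := by
      rw [hc₁def, hc₂def, ← add_div, hγdef, div_self hγne]
    have hWcdf : IsCDF (fun y => c₁ * W₁ y + c₂ * W₂ y) := isCDF_comb hc₁ hc₂ hcs hW₁ hW₂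
    have hterm : ∀ i : Fin n,
        Fn (x i) - γ * (c₁ * W₁ (x i) + c₂ * W₂ (x i)) - (1-γ) * Fb (x i)
          = a * (Fn (x i) - γ₁ * W₁ (x i) - (1-γ₁) * Fb (x i))
            + b * (Fn (x i) - γ₂ * W₂ (x i) - (1-γ₂) * Fb (x i)) := by
      intro i
      have e1 : γ * (c₁ * W₁ (x i) + c₂ * W₂ (x i))
          = a*γ₁*W₁ (x i) + b*γ₂*W₂ (x i) := by
        rw [hc₁def, hc₂def]
        field_simp
      rw [e1, hγdef]
      linear_combination (Fb (x i) - Fn (x i)) * hab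
    have hkey : f γ (fun y => c₁ * W₁ y + c₂ * W₂ y) ≤ a * f γ₁ W₁ + b * f γ₂ W₂ := by
      have e2 : f γ (fun y => c₁ * W₁ y + c₂ * W₂ y)
          = Real.sqrt ((n:ℝ)⁻¹ * ∑ i,
              (a * (Fn (x i) - γ₁ * W₁ (x i) - (1-γ₁) * Fb (x i))
                + b * (Fn (x i) - γ₂ * W₂ (x i) - (1-γ₂) * Fb (x i)))^2) := by
        simp only [hf]
        congr 2
        exact Finset.sum_congr rfl fun i _ => by rw [hterm i]
      rw [e2]
      refine le_trans (wsqrt_add n _ (by positivity) _ _) ?_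
      rw [wsqrt_smul n _ a ha, wsqrt_smul n _ b hb]
    have hmem : f γ (fun y => c₁ * W₁ y + c₂ * W₂ y) ∈ S γ :=
      ⟨fun y => c₁ * W₁ y + c₂ * W₂ y, hWcdf, rfl⟩
    have h5 := csInf_le (hSbdd γ) hmem
    have h6 : a * f γ₁ W₁ ≤ a * (sInf (S γ₁) + ε) :=
      mul_le_mul_of_nonneg_left hv₁.le ha
    have h7 : b * f γ₂ W₂ ≤ b * (sInf (S γ₂) + ε) :=
      mul_le_mul_of_nonneg_left hv₂.le hb
    nlinarith
  -- 1 ∈ A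
  have hFnCDF : IsCDF Fn := by rw [hFn]; exact empirical_isCDF n hn x
  have h1A : (1:ℝ) ∈ A := by
    rw [hA]
    refine ⟨⟨zero_le_one, le_refl 1⟩, ?_⟩
    have h0mem : (0:ℝ) ∈ S 1 := by
      refine ⟨Fn, hFnCDF, ?_⟩
      have hz : ∀ i : Fin n, Fn (x i) - 1 * Fn (x i) - (1-1) * Fb (x i) = 0 :=
        fun i => by ring
      simp [hf, hz]
    have hle : sInf (S 1) ≤ 0 := csInf_le (hSbdd 1) h0mem
    have hge : (0:ℝ) ≤ sInf (S 1) := le_csInf (hSne 1) (hSnn 1)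
    rw [hCS 1 ⟨zero_le_one, le_rfl⟩, le_antisymm hle hge, mul_zero]
    exact ht
  have hsub : A ⊆ Set.Icc (0:ℝ) 1 := by rw [hA]; exact fun γ h => h.1
  have hCbound : ∀ γ ∈ A, C γ ≤ t / Real.sqrt n := by
    intro γ hγ
    rw [hA] at hγ
    rw [le_div_iff₀ hsn, mul_comm]
    exact hγ.2
  have htdiv : Real.sqrt n * (t / Real.sqrt n) = t := by field_simp
  have hconv : Convex ℝ A := by
    intro γ₁ h₁ γ₂ h₂ a b ha hb hab
    rw [hA] at h₁ h₂ ⊢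
    refine ⟨(convex_Icc (0:ℝ) 1) h₁.1 h₂.1 ha hb hab, ?_⟩
    simp only [smul_eq_mul]
    have hnn : 0 ≤ a*γ₁ + b*γ₂ := add_nonneg (mul_nonneg ha h₁.1.1) (mul_nonneg hb h₂.1.1)
    have hag : 0 ≤ a * γ₁ := mul_nonneg ha h₁.1.1
    have hbg : 0 ≤ b * γ₂ := mul_nonneg hb h₂.1.1
    rcases eq_or_lt_of_le hnn with hz | hpos
    · by_cases hga : a = 0
      · have haγ : a * γ₁ = 0 := by rw [hga]; ring
        have hb1 : b = 1 := by linarith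
        have hbγ : b * γ₂ = γ₂ := by rw [hb1]; ring
        have heq : a*γ₁ + b*γ₂ = γ₂ := by linarith
        rw [heq]; exact h₂.2
      · have haγ : a * γ₁ = 0 := by linarith
        have hγ₁0 : γ₁ = 0 := by
          rcases mul_eq_zero.mp haγ with h | h
          · exact absurd h hga
          · exact h
        have hbγ : b * γ₂ = 0 := by linarith
        have heq : a*γ₁ + b*γ₂ = γ₁ := by linarith
        rw [heq]; exact h₁.2
    · have hIcc : a*γ₁ + b*γ₂ ∈ Set.Icc (0:ℝ) 1 := by
        have := (convex_Icc (0:ℝ) 1) h₁.1 h₂.1 ha hb hab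
        simpa using this
      rw [hCS _ hIcc]
      have h8 := hComb γ₁ γ₂ a b h₁.1.1 h₂.1.1 ha hb hab hpos
      have e₁ : sInf (S γ₁) ≤ t / Real.sqrt n := by
        rw [← hCS γ₁ h₁.1, le_div_iff₀ hsn, mul_comm]; exact h₁.2
      have e₂ : sInf (S γ₂) ≤ t / Real.sqrt n := by
        rw [← hCS γ₂ h₂.1, le_div_iff₀ hsn, mul_comm]; exact h₂.2
      have h9 : sInf (S (a*γ₁ + b*γ₂)) ≤ t / Real.sqrt n := by
        calc sInf (S (a*γ₁ + b*γ₂)) ≤ a * sInf (S γ₁) + b * sInf (S γ₂) := h8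
          _ ≤ a * (t / Real.sqrt n) + b * (t / Real.sqrt n) :=
              add_le_add (mul_le_mul_of_nonneg_left e₁ ha)
                (mul_le_mul_of_nonneg_left e₂ hb)
          _ = t / Real.sqrt n := by rw [← add_mul, hab, one_mul]
      calc Real.sqrt n * sInf (S (a*γ₁ + b*γ₂))
          ≤ Real.sqrt n * (t / Real.sqrt n) :=
            mul_le_mul_of_nonneg_left h9 hsn.le
        _ = t := htdiv
  have hAne : A.Nonempty := ⟨1, h1A⟩
  have hAbdd : BddBelow A := ⟨0, fun γ hγ => (hsub hγ).1⟩
  have hinf0 : (0:ℝ) ≤ sInf A := le_csInf hAne fun γ hγ => (hsub hγ).1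
  have hinf1 : sInf A ≤ 1 := csInf_le hAbdd h1A
  have hAmem : ∀ γ : ℝ, γ ∈ Set.Icc (0:ℝ) 1 → Real.sqrt n * C γ ≤ t → γ ∈ A := by
    intro γ h1 h2
    rw [hA]
    exact ⟨h1, h2⟩
  have hmemInf : sInf A ∈ A := by
    refine hAmem _ ⟨hinf0, hinf1⟩ ?_
    have hC' : C (sInf A) ≤ t / Real.sqrt n := by
      refine le_of_forall_pos_le_add ?_
      intro ε hε
      obtain ⟨γ, hγA, hγlt⟩ := exists_lt_of_csInf_lt hAne
        (lt_add_of_pos_right (sInf A) hε)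
      have hγIcc := hsub hγA
      have hle : sInf A ≤ γ := csInf_le hAbdd hγA
      have h10 := hCLip γ hγIcc (sInf A) ⟨hinf0, hinf1⟩
      have habs : |γ - sInf A| = γ - sInf A := abs_of_nonneg (by linarith)
      have hb := hCbound γ hγA
      rw [habs] at h10
      linarith
    calc Real.sqrt n * C (sInf A) ≤ Real.sqrt n * (t / Real.sqrt n) :=
        mul_le_mul_of_nonneg_left hC' hsn.le
      _ = t := htdiv
  refine ⟨hconv, hsub, h1A, ?_⟩
  apply Set.eq_of_subset_of_subset
  · intro γ hγ
    exact ⟨csInf_le hAbdd hγ, (hsub hγ).2⟩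
  · intro γ hγ
    exact (convex_iff_ordConnected.mp hconv).out hmemInf h1A hγ
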